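/- For every K ∈ ℝ it holds that ub^imp ≤ K if and only if f(K) ≤ 0. -/
import Mathlib


/-- `ubImp k m s` is the improved upper bound `ub^imp`: the maximum, over all
admissible interval tuples `(I_1, …, I_k)` with `I_l = [a_l, b_l] ⊆ [1, m_l]`,
of `(∑_l ∑_{i ∈ I_l} s^l_i) / (∑_l |I_l|)`. -/
noncomputable def ubImp (k : ℕ) (m : Fin k → ℕ) (s : Fin k → ℕ → ℝ) : ℝ :=
  sSup {r : ℝ | ∃ a b : Fin k → ℕ, (∀ l, 1 ≤ a l ∧ a l ≤ b l ∧ b l ≤ m l) ∧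
    r = (∑ l : Fin k, ∑ i ∈ Finset.Icc (a l) (b l), s l i) /
        (∑ l : Fin k, ((Finset.Icc (a l) (b l)).card : ℝ))}

/-- `fFun k m s K` is the function
`f(K) = ∑_l max_{I = [a,b] ⊆ [1, m_l]} (∑_{i ∈ I} s^l_i − K·|I|)`. -/
noncomputable def fFun (k : ℕ) (m : Fin k → ℕ) (s : Fin k → ℕ → ℝ) (K : ℝ) : ℝ :=
  ∑ l : Fin k, sSup {r : ℝ | ∃ a b : ℕ, 1 ≤ a ∧ a ≤ b ∧ b ≤ m l ∧
    r = (∑ i ∈ Finset.Icc a b, s l i) - K * ((Finset.Icc a b).card : ℝ)}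

theorem stmt1 (k : ℕ) (hk : 1 ≤ k) (m : Fin k → ℕ) (hm : ∀ l, 1 ≤ m l)
    (s : Fin k → ℕ → ℝ) (K : ℝ) :
    ubImp k m s ≤ K ↔ fFun k m s K ≤ 0 := by
  have hkne : Nonempty (Fin k) := ⟨⟨0, hk⟩⟩
  set T : Fin k → Set ℝ := fun l => {r : ℝ | ∃ a b : ℕ, 1 ≤ a ∧ a ≤ b ∧ b ≤ m l ∧
    r = (∑ i ∈ Finset.Icc a b, s l i) - K * ((Finset.Icc a b).card : ℝ)} with hTdef
  set S : Set ℝ := {r : ℝ | ∃ a b : Fin k → ℕ, (∀ l, 1 ≤ a l ∧ a l ≤ b l ∧ b l ≤ m l) ∧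
    r = (∑ l : Fin k, ∑ i ∈ Finset.Icc (a l) (b l), s l i) /
        (∑ l : Fin k, ((Finset.Icc (a l) (b l)).card : ℝ))} with hSdef
  have hTfin : ∀ l : Fin k, (T l).Finite := by
    intro l
    have hsub : T l ⊆ (fun p : ℕ × ℕ =>
        (∑ i ∈ Finset.Icc p.1 p.2, s l i) - K * ((Finset.Icc p.1 p.2).card : ℝ)) ''
        (Set.Icc 1 (m l) ×ˢ Set.Icc 1 (m l)) := by
      rintro r ⟨a, b, ha, hab, hb, rfl⟩
      exact ⟨(a, b), ⟨⟨ha, le_trans hab hb⟩, ⟨le_trans ha hab, hb⟩⟩, rfl⟩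
    exact Set.Finite.subset (((Set.finite_Icc _ _).prod (Set.finite_Icc _ _)).image _) hsub
  have hTne : ∀ l : Fin k, (T l).Nonempty := fun l =>
    ⟨_, 1, 1, le_refl 1, le_refl 1, hm l, rfl⟩
  have hSfin : S.Finite := by
    have hsub : S ⊆ (fun p : (Fin k → ℕ) × (Fin k → ℕ) =>
        (∑ l : Fin k, ∑ i ∈ Finset.Icc (p.1 l) (p.2 l), s l i) /
        (∑ l : Fin k, ((Finset.Icc (p.1 l) (p.2 l)).card : ℝ))) ''
        ((Set.pi Set.univ fun l => Set.Icc 1 (m l)) ×ˢ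
          (Set.pi Set.univ fun l => Set.Icc 1 (m l))) := by
      rintro r ⟨a, b, hab, rfl⟩
      refine ⟨(a, b), ⟨fun l _ => ⟨(hab l).1, le_trans (hab l).2.1 (hab l).2.2⟩,
        fun l _ => ⟨le_trans (hab l).1 (hab l).2.1, (hab l).2.2⟩⟩, rfl⟩
    exact Set.Finite.subset
      (((Set.Finite.pi fun l => Set.finite_Icc _ _).prod
        (Set.Finite.pi fun l => Set.finite_Icc _ _)).image _) hsub
  have hSne : S.Nonempty := by
    refine ⟨_, fun _ => 1, fun _ => 1, fun l => ⟨le_refl 1, le_refl 1, hm l⟩, rfl⟩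
  -- positivity of the denominator for any admissible tuple
  have hDpos : ∀ a b : Fin k → ℕ, (∀ l, a l ≤ b l) →
      (0 : ℝ) < ∑ l : Fin k, ((Finset.Icc (a l) (b l)).card : ℝ) := by
    intro a b hab
    refine Finset.sum_pos (fun l _ => ?_) Finset.univ_nonempty
    exact_mod_cast Finset.Nonempty.card_pos (Finset.nonempty_Icc.mpr (hab l))
  have hub : ubImp k m s = sSup S := rfl
  have hf : fFun k m s K = ∑ l : Fin k, sSup (T l) := rfl
  rw [hub, hf]
  constructor
  · intro h
    have hmem : ∀ l, sSup (T l) ∈ T l := fun l =>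
      Set.Nonempty.csSup_mem (hTne l) (hTfin l)
    choose a b ha hab hb heq using hmem
    set N : ℝ := ∑ l : Fin k, ∑ i ∈ Finset.Icc (a l) (b l), s l i with hN
    set D : ℝ := ∑ l : Fin k, ((Finset.Icc (a l) (b l)).card : ℝ) with hD
    have hDpos' : 0 < D := hDpos a b hab
    have hrmem : N / D ∈ S := ⟨a, b, fun l => ⟨ha l, hab l, hb l⟩, rfl⟩
    have hrle : N / D ≤ K := le_trans (le_csSup hSfin.bddAbove hrmem) h
    have hNle : N ≤ K * D := by
      rw [div_le_iff₀ hDpos'] at hrle; linarith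
    calc ∑ l : Fin k, sSup (T l)
        = ∑ l : Fin k, ((∑ i ∈ Finset.Icc (a l) (b l), s l i)
            - K * ((Finset.Icc (a l) (b l)).card : ℝ)) := by
          exact Finset.sum_congr rfl fun l _ => heq l
      _ = N - K * D := by
          rw [Finset.sum_sub_distrib, hN, hD, Finset.mul_sum]
      _ ≤ 0 := by linarith
  · intro h
    refine csSup_le hSne ?_
    rintro r ⟨a, b, hcond, rfl⟩
    set N : ℝ := ∑ l : Fin k, ∑ i ∈ Finset.Icc (a l) (b l), s l i with hN
    set D : ℝ := ∑ l : Fin k, ((Finset.Icc (a l) (b l)).card : ℝ) with hD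
    have hDpos' : 0 < D := hDpos a b fun l => (hcond l).2.1
    have hterm : ∀ l : Fin k, (∑ i ∈ Finset.Icc (a l) (b l), s l i)
        - K * ((Finset.Icc (a l) (b l)).card : ℝ) ≤ sSup (T l) := fun l =>
      le_csSup (hTfin l).bddAbove ⟨a l, b l, (hcond l).1, (hcond l).2.1, (hcond l).2.2, rfl⟩
    have hsum : N - K * D ≤ ∑ l : Fin k, sSup (T l) := by
      rw [hN, hD, Finset.mul_sum, ← Finset.sum_sub_distrib]
      exact Finset.sum_le_sum fun l _ => hterm l
    rw [div_le_iff₀ hDpos']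
    linarith
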